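/- Suppose each of the functions f₁, …, f_T : (ℝ^d)^h → ℝ is G-Lipschitz. Then C_T : (ℝ^d)^T → ℝ, C_T(x) = Σ_{t=1}^T f_t(x_{t−h+1:t}), is G√(Th)-Lipschitz with respect to the Euclidean norm on (ℝ^d)^T: |C_T(x) − C_T(y)| ≤ G√(Th)·‖x − y‖ for all x, y ∈ (ℝ^d)^T. (This is Lemma 1(b), Lipschitz part, of the paper.) -/

import Mathlib

/-- The sequence `x₁, …, x_T` padded with `x̄₀` for indices `t ≤ 0` (indices are `1`-based,
given as integers). -/
noncomputable def pad {d : ℕ} (T : ℕ) (xbar : EuclideanSpace ℝ (Fin d))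
    (x : Fin T → EuclideanSpace ℝ (Fin d)) (t : ℤ) : EuclideanSpace ℝ (Fin d) :=
  if ht : 1 ≤ t ∧ t ≤ T then x ⟨(t - 1).toNat, by omega⟩ else xbar

/-- The `t`-th window `x_{t-h+1:t} = (x_{t-h+1}, …, x_t) ∈ (ℝ^d)^h`, where the product
space carries the Euclidean (`L²`) norm. -/
noncomputable def window {d : ℕ} (h T : ℕ) (xbar : EuclideanSpace ℝ (Fin d))
    (x : Fin T → EuclideanSpace ℝ (Fin d)) (t : ℤ) :
    PiLp 2 (fun _ : Fin h => EuclideanSpace ℝ (Fin d)) :=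
  WithLp.toLp 2 (fun i => pad T xbar x (t - h + 1 + i))

/-- Sum of a nonnegative function (vanishing outside the image of `ψ`) over an injective
reindexing `φ` is at most the sum over `ψ`. -/
lemma sum_reindex_le {T : ℕ} (q : ℤ → ℝ) (hq : ∀ s, 0 ≤ q s)
    (φ ψ : Fin T → ℤ) (hφ : Function.Injective φ) (hψ : Function.Injective ψ)
    (hzero : ∀ s : ℤ, (∀ t : Fin T, ψ t ≠ s) → q s = 0) :
    ∑ t : Fin T, q (φ t) ≤ ∑ t : Fin T, q (ψ t) := by
  classical
  rw [show (∑ t : Fin T, q (φ t)) = ∑ s ∈ Finset.univ.image φ, q s from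
      (Finset.sum_image fun a _ b _ hab => hφ hab).symm,
    show (∑ t : Fin T, q (ψ t)) = ∑ s ∈ Finset.univ.image ψ, q s from
      (Finset.sum_image fun a _ b _ hab => hψ hab).symm]
  rw [← Finset.sum_inter_add_sum_sdiff (Finset.univ.image φ) (Finset.univ.image ψ) q]
  have h2 : ∑ s ∈ Finset.univ.image φ \ Finset.univ.image ψ, q s = 0 := by
    refine Finset.sum_eq_zero fun s hs => ?_
    have := (Finset.mem_sdiff.mp hs).2
    refine hzero s fun t hts => this ?_
    exact Finset.mem_image.mpr ⟨t, Finset.mem_univ t, hts⟩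
  rw [h2, add_zero]
  exact Finset.sum_le_sum_of_subset_of_nonneg (Finset.inter_subset_right)
    (fun s _ _ => hq s)

/-- If each `f_t : (ℝ^d)^h → ℝ` is `G`-Lipschitz, then
`C_T x = ∑_{t=1}^T f_t (x_{t-h+1:t})` is `G√(Th)`-Lipschitz on `(ℝ^d)^T` with the
Euclidean norm. -/
theorem CT_lipschitz {d h T : ℕ} (hd : 1 ≤ d) (hh : 1 ≤ h) (hT : 1 ≤ T)
    (xbar : EuclideanSpace ℝ (Fin d)) (G : ℝ)
    (f : Fin T → (PiLp 2 fun _ : Fin h => EuclideanSpace ℝ (Fin d)) → ℝ)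
    (hf : ∀ t, ∀ z w, |f t z - f t w| ≤ G * ‖z - w‖) :
    ∀ x y : PiLp 2 fun _ : Fin T => EuclideanSpace ℝ (Fin d),
      |(∑ t : Fin T, f t (window h T xbar x ((t : ℤ) + 1))) -
          ∑ t : Fin T, f t (window h T xbar y ((t : ℤ) + 1))| ≤
        G * Real.sqrt (T * h) * ‖x - y‖ := by
  classical
  intro x y
  -- G is nonnegative
  have hG : 0 ≤ G := by
    set z : PiLp 2 (fun _ : Fin h => EuclideanSpace ℝ (Fin d)) :=
      WithLp.toLp 2 (fun _ => WithLp.toLp 2 (fun _ => (1 : ℝ))) with hz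
    have hzne : z ≠ 0 := by
      intro hz0
      have : z ⟨0, hh⟩ ⟨0, hd⟩ = 0 := by rw [hz0]; rfl
      simp [hz] at this
    have hpos : 0 < ‖z - 0‖ := by
      rw [sub_zero]; exact norm_pos_iff.mpr hzne
    have h1 : 0 ≤ G * ‖z - 0‖ := le_trans (abs_nonneg _) (hf ⟨0, hT⟩ z 0)
    nlinarith
  -- the per-coordinate squared differences
  set q : ℤ → ℝ := fun s => ‖pad T xbar x s - pad T xbar y s‖ ^ 2 with hqdef
  have hq0 : ∀ s, 0 ≤ q s := fun s => sq_nonneg _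
  have hqzero : ∀ s : ℤ, (∀ t : Fin T, (t : ℤ) + 1 ≠ s) → q s = 0 := by
    intro s hs
    have hnot : ¬(1 ≤ s ∧ s ≤ T) := by
      rintro ⟨h1, h2⟩
      exact hs ⟨(s - 1).toNat, by omega⟩ (by simp; omega)
    simp [hqdef, pad, hnot]
  have hψinj : Function.Injective (fun t : Fin T => (t : ℤ) + 1) := by
    intro a b hab; simp at hab; exact Fin.ext (by omega)
  -- the sum over the natural indices is ‖x - y‖²
  have hsumq : ∑ t : Fin T, q ((t : ℤ) + 1) = ‖x - y‖ ^ 2 := by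
    rw [PiLp.norm_sq_eq_of_L2]
    refine Finset.sum_congr rfl fun t _ => ?_
    have ht : (1 : ℤ) ≤ (t : ℤ) + 1 ∧ (t : ℤ) + 1 ≤ T := ⟨by omega, by omega⟩
    have hidx : (⟨((t : ℤ) + 1 - 1).toNat, by omega⟩ : Fin T) = t := Fin.ext (by simp)
    simp only [hqdef, pad, dif_pos ht]
    rw [hidx]
    rfl
  -- window norms
  set w : Fin T → ℝ := fun t =>
    ‖window h T xbar x ((t : ℤ) + 1) - window h T xbar y ((t : ℤ) + 1)‖ with hwdef
  have hwnonneg : ∀ t, 0 ≤ w t := fun t => norm_nonneg _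
  have hw2 : ∀ t : Fin T, w t ^ 2 = ∑ i : Fin h, q ((t : ℤ) + 1 - h + 1 + i) := by
    intro t
    rw [hwdef]
    rw [PiLp.norm_sq_eq_of_L2]
    simp only [WithLp.ofLp_sub, window, Pi.sub_apply]
    rfl
  -- step 2: sum of squared window norms ≤ h ‖x-y‖²
  have step2 : ∑ t : Fin T, w t ^ 2 ≤ (h : ℝ) * ‖x - y‖ ^ 2 := by
    calc ∑ t : Fin T, w t ^ 2
        = ∑ t : Fin T, ∑ i : Fin h, q ((t : ℤ) + 1 - h + 1 + i) := by
          exact Finset.sum_congr rfl fun t _ => hw2 t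
      _ = ∑ i : Fin h, ∑ t : Fin T, q ((t : ℤ) + 1 - h + 1 + i) :=
          Finset.sum_comm
      _ ≤ ∑ i : Fin h, ∑ t : Fin T, q ((t : ℤ) + 1) := by
          refine Finset.sum_le_sum fun i _ => ?_
          refine sum_reindex_le q hq0 _ _ ?_ hψinj hqzero
          intro a b hab; simp only at hab; exact Fin.ext (by omega)
      _ = (h : ℝ) * ‖x - y‖ ^ 2 := by
          rw [Finset.sum_const, hsumq]; simp [mul_comm]
  -- step 3: Cauchy–Schwarz
  have step3 : ∑ t : Fin T, w t ≤ Real.sqrt (T * h) * ‖x - y‖ := by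
    have hcs : (∑ t : Fin T, w t) ^ 2 ≤ (T : ℝ) * ∑ t : Fin T, w t ^ 2 := by
      have := sq_sum_le_card_mul_sum_sq (s := (Finset.univ : Finset (Fin T))) (f := w)
      simpa using this
    have h1 : (∑ t : Fin T, w t) ^ 2 ≤ (T : ℝ) * ((h : ℝ) * ‖x - y‖ ^ 2) :=
      le_trans hcs (by
        have : (0:ℝ) ≤ (T:ℝ) := Nat.cast_nonneg T
        nlinarith [step2])
    have hsum_nonneg : 0 ≤ ∑ t : Fin T, w t := Finset.sum_nonneg fun t _ => hwnonneg t
    calc ∑ t : Fin T, w t = Real.sqrt ((∑ t : Fin T, w t) ^ 2) :=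
          (Real.sqrt_sq hsum_nonneg).symm
      _ ≤ Real.sqrt ((T : ℝ) * ((h : ℝ) * ‖x - y‖ ^ 2)) := Real.sqrt_le_sqrt h1
      _ = Real.sqrt (T * h) * ‖x - y‖ := by
          rw [show (T : ℝ) * ((h : ℝ) * ‖x - y‖ ^ 2) = ((T : ℝ) * h) * ‖x - y‖ ^ 2 by ring,
            Real.sqrt_mul (by positivity), Real.sqrt_sq (norm_nonneg _)]
  -- combine
  calc |(∑ t : Fin T, f t (window h T xbar x ((t : ℤ) + 1))) -
          ∑ t : Fin T, f t (window h T xbar y ((t : ℤ) + 1))|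
      = |∑ t : Fin T, (f t (window h T xbar x ((t : ℤ) + 1)) -
          f t (window h T xbar y ((t : ℤ) + 1)))| := by rw [Finset.sum_sub_distrib]
    _ ≤ ∑ t : Fin T, |f t (window h T xbar x ((t : ℤ) + 1)) -
          f t (window h T xbar y ((t : ℤ) + 1))| := Finset.abs_sum_le_sum_abs _ _
    _ ≤ ∑ t : Fin T, G * w t := Finset.sum_le_sum fun t _ => hf t _ _
    _ = G * ∑ t : Fin T, w t := by rw [Finset.mul_sum]
    _ ≤ G * (Real.sqrt (T * h) * ‖x - y‖) := mul_le_mul_of_nonneg_left step3 hG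
    _ = G * Real.sqrt (T * h) * ‖x - y‖ := by ring
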